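/- Let (u_ε) solve the regularized problems ∂_t²u_ε − Σ_j ∂_{x_j}(h_{j,ε}∂_{x_j}u_ε) = 0 with h_{j,ε} ∈ W^{1,∞}(ℝ^d), h_{j,ε} ≥ c₀ > 0, data u_{0,ε} ∈ H², u_{1,ε} ∈ H¹ satisfying ‖h_{j,ε}‖_{W^{1,∞}} ≲ ε^{-N₀}, ‖u_{0,ε}‖_{H²} ≲ ε^{-N₁}, ‖u_{1,ε}‖_{H¹} ≲ ε^{-N₂}, and assume all h_{j,ε} are equal to a common h_ε. Then for all t ∈ [0,T], ‖u_ε(t,·)‖_{H²} ≲ ε^{-2N₀ − max(N₁,N₂)}, i.e. (u_ε) is C¹-moderate and hence a very weak solution exists. -/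

import Mathlib

open MeasureTheory

/-- The `j`-th partial derivative `∂_{x_j} f`. -/
noncomputable def pd (d : ℕ) (j : Fin d) (f : (Fin d → ℝ) → ℝ) (x : Fin d → ℝ) : ℝ :=
  fderiv ℝ f x (Pi.single j 1)

/-- The Laplacian `Δf = Σ_j ∂²_{x_j} f`. -/
noncomputable def lap (d : ℕ) (f : (Fin d → ℝ) → ℝ) (x : Fin d → ℝ) : ℝ :=
  ∑ j, pd d j (pd d j f) x

/-- `L²` norm. -/
noncomputable def L2 (d : ℕ) (f : (Fin d → ℝ) → ℝ) : ENNReal :=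
  eLpNorm f 2 (volume : Measure (Fin d → ℝ))

/-- `L^∞` norm. -/
noncomputable def Linf (d : ℕ) (f : (Fin d → ℝ) → ℝ) : ENNReal :=
  eLpNorm f ⊤ (volume : Measure (Fin d → ℝ))

/-- The `H¹` norm `‖f‖_{L²} + Σ_j ‖∂_j f‖_{L²}`. -/
noncomputable def H1n (d : ℕ) (f : (Fin d → ℝ) → ℝ) : ENNReal :=
  L2 d f + ∑ j, L2 d (pd d j f)

/-- The `H²` norm `‖f‖_{L²} + Σ_j ‖∂_j f‖_{L²} + ‖Δf‖_{L²}` used in the paper. -/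
noncomputable def H2n (d : ℕ) (f : (Fin d → ℝ) → ℝ) : ENNReal :=
  L2 d f + ∑ j, L2 d (pd d j f) + L2 d (lap d f)

/-- The `W^{1,∞}` norm `‖f‖_{L^∞} + ‖∇f‖_{L^∞}`. -/
noncomputable def W1i (d : ℕ) (f : (Fin d → ℝ) → ℝ) : ENNReal :=
  Linf d f + Linf d (fun x => ‖fderiv ℝ f x‖)

/-- moderateness (`C¹`-moderateness, hence existence of a very weak solution) of
the net of solutions of the regularised problems: if the coefficient, data and solution nets
satisfy the regularised equation and the moderateness bounds
`‖h_ε‖_{W^{1,∞}} ≲ ε^{-N₀}`, `‖u_{0,ε}‖_{H²} ≲ ε^{-N₁}`, `‖u_{1,ε}‖_{H¹} ≲ ε^{-N₂}`, and the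
energy estimates of Theorem 2.1 hold for the regularised problems, then
`‖u_ε(t,·)‖_{H²} ≲ ε^{-2N₀ − max(N₁,N₂)}` for all `t ∈ [0,T]`. -/
theorem very_weak_solution_moderate (d : ℕ) (T : ℝ) (hT : 0 < T)
    (N₀ N₁ N₂ : ℕ) (c₀ : ℝ) (hc₀ : 0 < c₀)
    (h : ℝ → (Fin d → ℝ) → ℝ)                    -- common coefficient net h_ε
    (u0e u1e : ℝ → (Fin d → ℝ) → ℝ)              -- data nets
    (u : ℝ → ℝ → (Fin d → ℝ) → ℝ)                -- solution net u_ε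
    -- regularity and positivity of the coefficient net
    (hhsm : ∀ ε ∈ Set.Ioc (0:ℝ) 1, ContDiff ℝ ⊤ (h ε))
    (hpos : ∀ ε ∈ Set.Ioc (0:ℝ) 1, ∀ x, c₀ ≤ h ε x)
    -- regularity of the solution net
    (hureg : ∀ ε ∈ Set.Ioc (0:ℝ) 1,
      ContDiff ℝ 2 (fun p : ℝ × (Fin d → ℝ) => u ε p.1 p.2))
    -- the regularised equation and data
    (hPDE : ∀ ε ∈ Set.Ioc (0:ℝ) 1, ∀ t ∈ Set.Icc (0:ℝ) T, ∀ x,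
      deriv (fun s => deriv (fun τ => u ε τ x) s) t
        = ∑ j, pd d j (fun y => h ε y * pd d j (u ε t) y) x)
    (hinit0 : ∀ ε ∈ Set.Ioc (0:ℝ) 1, ∀ x, u ε 0 x = u0e ε x)
    (hinit1 : ∀ ε ∈ Set.Ioc (0:ℝ) 1, ∀ x, deriv (fun s => u ε s x) 0 = u1e ε x)
    -- moderateness of coefficients and data
    (hmodh : ∃ C : ℝ, 0 < C ∧ ∀ ε ∈ Set.Ioc (0:ℝ) 1,
      W1i d (h ε) ≤ ENNReal.ofReal (C / ε ^ N₀))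
    (hmod0 : ∃ C : ℝ, 0 < C ∧ ∀ ε ∈ Set.Ioc (0:ℝ) 1,
      H2n d (u0e ε) ≤ ENNReal.ofReal (C / ε ^ N₁))
    (hmod1 : ∃ C : ℝ, 0 < C ∧ ∀ ε ∈ Set.Ioc (0:ℝ) 1,
      H1n d (u1e ε) ≤ ENNReal.ofReal (C / ε ^ N₂))
    -- the energy estimates of Theorem 2.1, applied to the regularised problems
    (hEst1 : ∃ C : ℝ, 0 < C ∧ ∀ ε ∈ Set.Ioc (0:ℝ) 1, ∀ t ∈ Set.Icc (0:ℝ) T,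
      L2 d (u ε t) + L2 d (fun x => deriv (fun s => u ε s x) t)
          + ∑ j, L2 d (pd d j (u ε t))
        ≤ ENNReal.ofReal C * (1 + (d : ENNReal) * (Linf d (h ε)) ^ ((1:ℝ)/2))
            * (H1n d (u0e ε) + L2 d (u1e ε)))
    (hEst2 : ∃ C : ℝ, 0 < C ∧ ∀ ε ∈ Set.Ioc (0:ℝ) 1, ∀ t ∈ Set.Icc (0:ℝ) T,
      L2 d (lap d (u ε t))
        ≤ ENNReal.ofReal C
            * max ((W1i d (h ε)) ^ ((1:ℝ)/2)) (W1i d (h ε))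
            * (1 + max ((W1i d (h ε)) ^ ((1:ℝ)/2)) (W1i d (h ε)))
            * (H2n d (u0e ε) + H1n d (u1e ε))) :
    ∃ C : ℝ, 0 < C ∧ ∀ ε ∈ Set.Ioc (0:ℝ) 1, ∀ t ∈ Set.Icc (0:ℝ) T,
      H2n d (u ε t) ≤ ENNReal.ofReal (C / ε ^ (2 * N₀ + max N₁ N₂)) := by
  clear hhsm hpos hureg hPDE hinit0 hinit1 hc₀ hT
  obtain ⟨C0, hC0, hmh⟩ := hmodh
  obtain ⟨C1, hC1, hm0⟩ := hmod0
  obtain ⟨C2, hC2, hm1⟩ := hmod1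
  obtain ⟨Ca, hCa, hE1⟩ := hEst1
  obtain ⟨Cb, hCb, hE2⟩ := hEst2
  set K : ℝ := max C0 1 with hK
  have hK1 : (1:ℝ) ≤ K := le_max_right _ _
  refine ⟨(Ca * (1 + d) + 2 * Cb) * K ^ 2 * (C1 + C2), by positivity, ?_⟩
  intro ε hε t ht
  have hε0 : 0 < ε := hε.1
  have hε1 : ε ≤ 1 := hε.2
  have hεp : ∀ n : ℕ, 0 < ε ^ n := fun n => pow_pos hε0 n
  set A : ENNReal := ENNReal.ofReal (K / ε ^ N₀) with hA
  have hA1 : (1:ENNReal) ≤ A := by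
    rw [hA, ENNReal.one_le_ofReal, le_div_iff₀ (hεp N₀)]
    calc (1:ℝ) * ε ^ N₀ = ε ^ N₀ := one_mul _
      _ ≤ 1 := pow_le_one₀ hε0.le hε1
      _ ≤ K := hK1
  have hXA : W1i d (h ε) ≤ A := by
    refine (hmh ε hε).trans (ENNReal.ofReal_le_ofReal ?_)
    gcongr
    exact le_max_left _ _
  have sq : ∀ X : ENNReal, X ≤ A → X ^ ((1:ℝ)/2) ≤ A := by
    intro X hXle
    rcases le_total X 1 with hX | hX
    · exact (ENNReal.rpow_le_one hX (by norm_num)).trans hA1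
    · calc X ^ ((1:ℝ)/2) ≤ X ^ (1:ℝ) :=
            ENNReal.rpow_le_rpow_of_exponent_le hX (by norm_num)
        _ = X := ENNReal.rpow_one X
        _ ≤ A := hXle
  have hLinf : Linf d (h ε) ≤ A := le_trans le_self_add hXA
  have hM : max ((W1i d (h ε)) ^ ((1:ℝ)/2)) (W1i d (h ε)) ≤ A :=
    max_le (sq _ hXA) hXA
  -- bound on the data norms
  set B : ENNReal := ENNReal.ofReal ((C1 + C2) / ε ^ (max N₁ N₂)) with hB
  have hdata : H2n d (u0e ε) + H1n d (u1e ε) ≤ B := by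
    calc H2n d (u0e ε) + H1n d (u1e ε)
        ≤ ENNReal.ofReal (C1 / ε ^ N₁) + ENNReal.ofReal (C2 / ε ^ N₂) :=
          add_le_add (hm0 ε hε) (hm1 ε hε)
      _ = ENNReal.ofReal (C1 / ε ^ N₁ + C2 / ε ^ N₂) := by
          rw [ENNReal.ofReal_add (by positivity) (by positivity)]
      _ ≤ B := by
          rw [hB]
          apply ENNReal.ofReal_le_ofReal
          rw [add_div]
          refine add_le_add
            (div_le_div_of_nonneg_left hC1.le (hεp _)
              (pow_le_pow_of_le_one hε0.le hε1 (le_max_left _ _)))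
            (div_le_div_of_nonneg_left hC2.le (hεp _)
              (pow_le_pow_of_le_one hε0.le hε1 (le_max_right _ _)))
  have hdata1 : H1n d (u0e ε) + L2 d (u1e ε) ≤ B := by
    refine le_trans (add_le_add ?_ ?_) hdata
    · exact le_self_add
    · exact le_self_add
  -- bound each energy estimate by a common quantity
  have hE1' : L2 d (u ε t) + ∑ j, L2 d (pd d j (u ε t))
      ≤ ENNReal.ofReal Ca * ((1 + (d:ENNReal)) * A) * B := by
    calc L2 d (u ε t) + ∑ j, L2 d (pd d j (u ε t))
        ≤ L2 d (u ε t) + L2 d (fun x => deriv (fun s => u ε s x) t)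
            + ∑ j, L2 d (pd d j (u ε t)) := by
          rw [add_assoc]
          exact add_le_add le_rfl le_add_self
      _ ≤ ENNReal.ofReal Ca * (1 + (d : ENNReal) * (Linf d (h ε)) ^ ((1:ℝ)/2))
            * (H1n d (u0e ε) + L2 d (u1e ε)) := hE1 ε hε t ht
      _ ≤ ENNReal.ofReal Ca * ((1 + (d:ENNReal)) * A) * B := by
          refine mul_le_mul' (mul_le_mul' le_rfl ?_) hdata1
          calc 1 + (d : ENNReal) * (Linf d (h ε)) ^ ((1:ℝ)/2)
              ≤ A + (d : ENNReal) * A :=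
                add_le_add hA1 (mul_le_mul' le_rfl (sq _ hLinf))
            _ = (1 + (d:ENNReal)) * A := by ring
  have hE2' : L2 d (lap d (u ε t)) ≤ ENNReal.ofReal Cb * (2 * (A * A)) * B := by
    calc L2 d (lap d (u ε t))
        ≤ ENNReal.ofReal Cb
            * max ((W1i d (h ε)) ^ ((1:ℝ)/2)) (W1i d (h ε))
            * (1 + max ((W1i d (h ε)) ^ ((1:ℝ)/2)) (W1i d (h ε)))
            * (H2n d (u0e ε) + H1n d (u1e ε)) := hE2 ε hε t ht
      _ ≤ ENNReal.ofReal Cb * A * (A + A) * B := by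
          refine mul_le_mul' (mul_le_mul' (mul_le_mul' le_rfl hM) ?_) hdata
          exact add_le_add hA1 hM
      _ = ENNReal.ofReal Cb * (2 * (A * A)) * B := by ring
  have hAA : A ≤ A * A := by
    calc A = 1 * A := (one_mul A).symm
      _ ≤ A * A := mul_le_mul' hA1 le_rfl
  have htot : H2n d (u ε t)
      ≤ (ENNReal.ofReal Ca * (1 + (d:ENNReal)) + 2 * ENNReal.ofReal Cb)
          * (A * A) * B := by
    calc H2n d (u ε t)
        = (L2 d (u ε t) + ∑ j, L2 d (pd d j (u ε t))) + L2 d (lap d (u ε t)) := rfl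
      _ ≤ ENNReal.ofReal Ca * ((1 + (d:ENNReal)) * A) * B
            + ENNReal.ofReal Cb * (2 * (A * A)) * B := add_le_add hE1' hE2'
      _ ≤ ENNReal.ofReal Ca * ((1 + (d:ENNReal)) * (A * A)) * B
            + ENNReal.ofReal Cb * (2 * (A * A)) * B := by
          gcongr
      _ = (ENNReal.ofReal Ca * (1 + (d:ENNReal)) + 2 * ENNReal.ofReal Cb)
            * (A * A) * B := by ring
  refine htot.trans ?_
  have hcast : (1 + (d:ENNReal)) = ENNReal.ofReal (1 + d) := by
    rw [ENNReal.ofReal_add (by norm_num) (Nat.cast_nonneg d), ENNReal.ofReal_one,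
      ENNReal.ofReal_natCast]
  have h2 : (2 : ENNReal) = ENNReal.ofReal 2 := by
    rw [ENNReal.ofReal_ofNat]
  rw [hcast, h2, hA, hB, ← ENNReal.ofReal_mul hCa.le, ← ENNReal.ofReal_mul (by norm_num),
    ← ENNReal.ofReal_add (by positivity) (by positivity),
    ← ENNReal.ofReal_mul (by positivity), ← ENNReal.ofReal_mul (by positivity),
    ← ENNReal.ofReal_mul (by positivity)]
  apply ENNReal.ofReal_le_ofReal
  have hεne : ε ≠ 0 := hε0.ne'
  apply le_of_eq
  rw [pow_add, pow_mul, pow_two]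
  field_simp
  ring
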